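/- Let H_∞ be an infinite upper Hessenberg matrix bounded on ℓ² with ‖H_∞‖₂ ≤ C, and suppose g(s) = Σ_{ℓ=0}^∞ w_ℓ φ_ℓ(s) where (φ_0(t), φ_1(t), ...) = exp(tH_∞)e_1 and the coefficient sequence (w_ℓ) is bounded with Σ|w_ℓ| ≤ ‖W‖₁ < ∞ (or ℓ² bounded ‖W‖₂ < ∞). Then the truncation error e_n = g(s) − Σ_{ℓ=0}^{n-1} w_ℓ φ_ℓ(s) satisfies |e_n| ≤ ‖W‖₂ ‖R_n(sH_∞)e_1‖₂ ≤ ‖W‖₂ R_n(|s|C), and hence e_n → 0 as n → ∞. -/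

import Mathlib

open scoped ENNReal NNReal
set_option maxHeartbeats 1000000
set_option synthInstance.maxHeartbeats 400000


/-- Taylor remainder of the exponential: `R_n(z) = Σ_{ℓ=n}^∞ z^ℓ/ℓ!`. -/
noncomputable def expRemainder (n : ℕ) (z : ℝ) : ℝ :=
  ∑' ℓ : ℕ, z ^ (n + ℓ) / (n + ℓ).factorial

lemma hess_pow (T : lp (fun _ : ℕ => ℂ) 2 →L[ℂ] lp (fun _ : ℕ => ℂ) 2)
    (hHess : ∀ j k : ℕ, j > k + 1 → (T (lp.single 2 k 1)) j = 0) :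
    ∀ i j : ℕ, i < j → ((T ^ i) (lp.single 2 0 1)) j = 0 := by
  intro i
  induction i with
  | zero =>
    intro j hj
    simp only [pow_zero, ContinuousLinearMap.one_apply]
    exact lp.single_apply_ne 2 0 1 (Nat.pos_of_ne_zero (by omega)).ne'
  | succ i ih =>
    intro j hj
    set x := (T ^ i) (lp.single 2 0 1) with hx
    have hxe : (T ^ (i + 1)) (lp.single 2 0 1) = T x := by
      rw [pow_succ']; rfl
    have hxsum : x = ∑ k ∈ Finset.range (i + 1), (x k) • lp.single 2 k (1 : ℂ) := by
      apply lp.ext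
      funext m
      rw [lp.coeFn_sum]
      simp only [Finset.sum_apply, lp.coeFn_smul, Pi.smul_apply, lp.single_apply,
        smul_eq_mul]
      by_cases hm : m < i + 1
      · rw [Finset.sum_eq_single m]
        · simp
        · intro k hk hkm
          simp [Ne.symm hkm]
        · intro hmem
          exact absurd (Finset.mem_range.mpr hm) hmem
      · rw [ih m (by omega)]
        symm
        apply Finset.sum_eq_zero
        intro k hk
        have : m ≠ k := by
          have := Finset.mem_range.mp hk; omega
        simp [this]
    rw [hxe, hxsum, map_sum]
    rw [lp.coeFn_sum]
    simp only [Finset.sum_apply]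
    apply Finset.sum_eq_zero
    intro k hk
    rw [map_smul, lp.coeFn_smul, Pi.smul_apply, hHess j k (by have := Finset.mem_range.mp hk; omega)]
    simp

/-- let `T` be a bounded upper Hessenberg operator on `ℓ²` with `‖T‖ ≤ C`,
basis functions `φ_ℓ(t) = e_{ℓ+1}ᵀ exp(tT) e₁`, and `g(s) = Σ_ℓ w_ℓ φ_ℓ(s)` with
`Σ_ℓ |w_ℓ| < ∞`.  Then the truncation error `e_n = g(s) - Σ_{ℓ<n} w_ℓ φ_ℓ(s)` satisfies
`|e_n| ≤ ‖W‖₂ ‖R_n(sT)e₁‖₂ ≤ ‖W‖₂ R_n(|s| C)`, and hence `e_n → 0` as `n → ∞`. -/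
theorem series_truncation_error
    (T : lp (fun _ : ℕ => ℂ) 2 →L[ℂ] lp (fun _ : ℕ => ℂ) 2)
    (hHess : ∀ j k : ℕ, j > k + 1 → (T (lp.single 2 k 1)) j = 0)
    (C : ℝ) (hC : ‖T‖ ≤ C)
    (w : ℕ → ℂ) (hw : Summable fun ℓ => ‖w ℓ‖)
    (φ : ℕ → ℝ → ℂ)
    (hφ : ∀ ℓ : ℕ, ∀ t : ℝ, φ ℓ t = (NormedSpace.exp ((t : ℂ) • T) (lp.single 2 0 1)) ℓ)
    (g : ℝ → ℂ) (hg : ∀ t : ℝ, g t = ∑' ℓ : ℕ, w ℓ * φ ℓ t)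
    (W2 : ℝ) (hW2 : W2 = (∑' ℓ : ℕ, ‖w ℓ‖ ^ 2) ^ (1 / 2 : ℝ))
    (s : ℝ) :
    (∀ n : ℕ,
      ‖g s - ∑ ℓ ∈ Finset.range n, w ℓ * φ ℓ s‖ ≤
        W2 * ‖(NormedSpace.exp ((s : ℂ) • T) -
          ∑ ℓ ∈ Finset.range n, ((s ^ ℓ / ℓ.factorial : ℝ) : ℂ) • T ^ ℓ) (lp.single 2 0 1)‖ ∧
      W2 * ‖(NormedSpace.exp ((s : ℂ) • T) -
          ∑ ℓ ∈ Finset.range n, ((s ^ ℓ / ℓ.factorial : ℝ) : ℂ) • T ^ ℓ) (lp.single 2 0 1)‖ ≤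
        W2 * expRemainder n (|s| * C)) ∧
    Filter.Tendsto (fun n : ℕ => g s - ∑ ℓ ∈ Finset.range n, w ℓ * φ ℓ s)
      Filter.atTop (nhds 0) := by
  have hC0 : 0 ≤ C := le_trans (norm_nonneg T) hC
  set e₁ : lp (fun _ : ℕ => ℂ) 2 := lp.single 2 0 1 with he₁
  set u : lp (fun _ : ℕ => ℂ) 2 := NormedSpace.exp ((s : ℂ) • T) e₁ with hu
  have hrewφ : ∀ ℓ, φ ℓ s = u ℓ := fun ℓ => hφ ℓ s
  -- summability of the series
  have hφb : ∀ ℓ, ‖φ ℓ s‖ ≤ ‖u‖ := fun ℓ => by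
    rw [hrewφ]; exact lp.norm_apply_le_norm (by norm_num) u ℓ
  have hnorms : Summable (fun ℓ => ‖w ℓ * φ ℓ s‖) := by
    apply Summable.of_nonneg_of_le (fun _ => norm_nonneg _) (fun ℓ => ?_) (hw.mul_right ‖u‖)
    rw [norm_mul]
    exact mul_le_mul_of_nonneg_left (hφb ℓ) (norm_nonneg _)
  have hsum : Summable (fun ℓ => w ℓ * φ ℓ s) := hnorms.of_norm
  -- w as an ℓ² element
  have hw2sum : Summable (fun ℓ => ‖w ℓ‖ ^ 2) := by
    apply Summable.of_nonneg_of_le (fun ℓ => sq_nonneg _) (fun ℓ => ?_) (hw.mul_left (∑' ℓ, ‖w ℓ‖))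
    rw [sq]
    exact mul_le_mul_of_nonneg_right (Summable.le_tsum hw ℓ (fun i _ => norm_nonneg _)) (norm_nonneg _)
  have hmemw : Memℓp w 2 := by
    apply memℓp_gen
    have h2 : (2 : ℝ≥0∞).toReal = (2 : ℝ) := by norm_num
    simpa [h2, Real.rpow_natCast] using hw2sum
  set wv : lp (fun _ : ℕ => ℂ) 2 := ⟨w, hmemw⟩ with hwv
  have hwvnorm : ‖wv‖ = W2 := by
    rw [hW2, lp.norm_eq_tsum_rpow (by norm_num) wv]
    norm_num
    rfl
  have hW2nn : 0 ≤ W2 := by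
    rw [hW2]
    exact Real.rpow_nonneg (tsum_nonneg fun _ => sq_nonneg _) _
  have hconj : (2 : ℝ≥0∞).toReal.HolderConjugate (2 : ℝ≥0∞).toReal := by
    rw [Real.holderConjugate_iff]; norm_num
  -- exp series
  have hexp : HasSum (fun i : ℕ => ((s ^ i / i.factorial : ℝ) : ℂ) • T ^ i)
      (NormedSpace.exp ((s : ℂ) • T)) := by
    have h := NormedSpace.exp_series_hasSum_exp' (𝕂 := ℂ) ((s : ℂ) • T)
    convert h using 2 with i
    case e'_3 => rfl
    case e'_4 => rfl
    rw [smul_pow, smul_smul]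
    congr 1
    push_cast
    ring
  have hTm : ∀ m : ℕ, ‖T ^ m‖ ≤ C ^ m := by
    intro m
    induction m with
    | zero =>
      rw [pow_zero, pow_zero, ContinuousLinearMap.one_def]
      exact ContinuousLinearMap.norm_id_le
    | succ m ihm =>
      calc ‖T ^ (m + 1)‖ = ‖T ^ m * T‖ := by rw [pow_succ]
        _ ≤ ‖T ^ m‖ * ‖T‖ := norm_mul_le _ _
        _ ≤ C ^ m * C := mul_le_mul ihm hC (norm_nonneg _) (pow_nonneg hC0 _)
        _ = C ^ (m + 1) := (pow_succ C m).symm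
  have hbound : ∀ m : ℕ, ‖((s ^ m / m.factorial : ℝ) : ℂ) • T ^ m‖ ≤
      (|s| * C) ^ m / m.factorial := by
    intro m
    rw [norm_smul (((s ^ m / m.factorial : ℝ) : ℂ)) (T ^ m)]
    have h1 : ‖((s ^ m / m.factorial : ℝ) : ℂ)‖ = |s| ^ m / m.factorial := by
      rw [Complex.norm_real, Real.norm_eq_abs, abs_div, abs_pow, Nat.abs_cast]
    rw [h1, mul_pow]
    calc |s| ^ m / m.factorial * ‖T ^ m‖ ≤ |s| ^ m / m.factorial * C ^ m := by
          apply mul_le_mul_of_nonneg_left (hTm m)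
          positivity
      _ = |s| ^ m * C ^ m / m.factorial := by ring
  have hne1 : ‖e₁‖ = 1 := by
    rw [he₁]
    simpa using lp.norm_single (p := 2) (by norm_num) (fun _ : ℕ => (1 : ℂ)) 0
  refine ⟨fun n => ?_, ?_⟩
  · set P : lp (fun _ : ℕ => ℂ) 2 →L[ℂ] lp (fun _ : ℕ => ℂ) 2 :=
      ∑ ℓ ∈ Finset.range n, ((s ^ ℓ / ℓ.factorial : ℝ) : ℂ) • T ^ ℓ with hP
    set v : lp (fun _ : ℕ => ℂ) 2 := (NormedSpace.exp ((s : ℂ) • T) - P) e₁ with hv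
    have hvtail : ∀ ℓ, n ≤ ℓ → v ℓ = φ ℓ s := by
      intro ℓ hℓ
      rw [hv, ContinuousLinearMap.sub_apply, lp.coeFn_sub, Pi.sub_apply, hrewφ]
      have : (P e₁) ℓ = 0 := by
        rw [hP, ContinuousLinearMap.sum_apply, lp.coeFn_sum]
        simp only [Finset.sum_apply]
        apply Finset.sum_eq_zero
        intro i hi
        rw [ContinuousLinearMap.smul_apply, lp.coeFn_smul, Pi.smul_apply,
          hess_pow T hHess i ℓ (by have := Finset.mem_range.mp hi; omega)]
        simp
      rw [this, sub_zero]
    constructor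
    · -- first inequality
      have htail : g s - ∑ ℓ ∈ Finset.range n, w ℓ * φ ℓ s
          = ∑' k, w (k + n) * φ (k + n) s := by
        rw [hg s, ← Summable.sum_add_tsum_nat_add n hsum]
        ring
      have hshift : Summable (fun k => ‖w (k + n) * φ (k + n) s‖) :=
        (summable_nat_add_iff n).mpr hnorms
      have hmulsum : Summable (fun ℓ => ‖wv ℓ‖ * ‖v ℓ‖) := lp.summable_mul hconj wv v
      rw [htail]
      calc ‖∑' k, w (k + n) * φ (k + n) s‖ ≤ ∑' k, ‖w (k + n) * φ (k + n) s‖ :=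
            norm_tsum_le_tsum_norm hshift
        _ ≤ ∑' ℓ, ‖wv ℓ‖ * ‖v ℓ‖ := by
            refine Summable.tsum_le_tsum_of_inj (fun k => k + n) (add_left_injective n)
              (fun c _ => mul_nonneg (norm_nonneg _) (norm_nonneg _)) (fun k => ?_) hshift hmulsum
            rw [norm_mul, ← hvtail (k + n) (Nat.le_add_left n k)]
        _ ≤ ‖wv‖ * ‖v‖ := lp.tsum_mul_le_mul_norm' hconj wv v
        _ = W2 * ‖v‖ := by rw [hwvnorm]
    · -- second inequality
      apply mul_le_mul_of_nonneg_left _ hW2nn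
      have hsumR : Summable (fun k : ℕ => (|s| * C) ^ (n + k) / (n + k).factorial) := by
        have h := (summable_nat_add_iff
          (f := fun m => (|s| * C) ^ m / m.factorial) n).mpr
          (Real.summable_pow_div_factorial (|s| * C))
        simpa [add_comm] using h
      have hRval : HasSum (fun k : ℕ => (|s| * C) ^ (n + k) / (n + k).factorial)
          (expRemainder n (|s| * C)) := hsumR.hasSum
      have hop : NormedSpace.exp ((s : ℂ) • T) - P
          = ∑' k, ((s ^ (k + n) / (k + n).factorial : ℝ) : ℂ) • T ^ (k + n) := by
        have h1 := Summable.sum_add_tsum_nat_add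
          (f := fun i => ((s ^ i / i.factorial : ℝ) : ℂ) • T ^ i) n hexp.summable
        rw [hexp.tsum_eq] at h1
        rw [hP, ← h1, add_sub_cancel_left]
      calc ‖(NormedSpace.exp ((s : ℂ) • T) - P) e₁‖
          ≤ ‖NormedSpace.exp ((s : ℂ) • T) - P‖ * ‖e₁‖ :=
            ContinuousLinearMap.le_opNorm _ _
        _ = ‖∑' k, ((s ^ (k + n) / (k + n).factorial : ℝ) : ℂ) • T ^ (k + n)‖ := by
            rw [hne1, mul_one, hop]
        _ ≤ expRemainder n (|s| * C) := by
            refine tsum_of_norm_bounded hRval (fun k => ?_)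
            simpa [Nat.add_comm] using hbound (k + n)
  · -- tendsto
    have hgs : HasSum (fun ℓ => w ℓ * φ ℓ s) (g s) := by
      rw [hg s]; exact hsum.hasSum
    have h := hgs.tendsto_sum_nat
    have := Filter.Tendsto.sub (tendsto_const_nhds (x := g s) (f := Filter.atTop)) h
    simpa using this
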